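/- In a canonical 2-hop labeling with respect to a total order r on a finite weighted graph, for every pair of vertices s, t there exists a common hub c ∈ L(s) ∩ L(t) with d(s,c)+d(c,t) = d(s,t); namely, the highest-ranked vertex on any shortest s–t path serves as such a hub. Hence the canonical labeling satisfies the 2-hop cover property. -/

import Mathlib

open scoped ENNReal

/-- Cost of the walk `s :: p ++ [t]`: `p` is the list of intermediate vertices, a missing
edge has weight `⊤`. -/
noncomputable def pathCost {V : Type*} (w : V → V → ℝ≥0∞) : V → List V → V → ℝ≥0∞
  | s, [], t => w s t
  | s, x :: xs, t => w s x + pathCost w x xs t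

/-- Shortest-path distance induced by the weight function `w`. -/
noncomputable def gdist {V : Type*} [DecidableEq V] (w : V → V → ℝ≥0∞) (s t : V) : ℝ≥0∞ :=
  if s = t then 0 else ⨅ p : List V, pathCost w s p t

/-- `u` is a hub of `v` in the canonical 2-hop labeling w.r.t. rank `r`: either `u = v`, or
`r u ≥ r v` and `u` is the maximum-rank vertex on some shortest path between `v` and `u`
(the intermediate vertices of that shortest path all have rank at most `r u`). -/
def canonicalHub {V : Type*} [DecidableEq V] (w : V → V → ℝ≥0∞) (r : V → ℕ) (v u : V) :
    Prop :=
  u = v ∨ (r v ≤ r u ∧ ∃ p : List V, pathCost w v p u = gdist w v u ∧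
    gdist w v u ≠ ⊤ ∧ ∀ x ∈ p, r x ≤ r u)

section Aux

variable {V : Type*} [DecidableEq V] (w : V → V → ℝ≥0∞)

theorem pathCost_append (a : List V) : ∀ (s : V) (x : V) (b : List V) (t : V),
    pathCost w s (a ++ x :: b) t = pathCost w s a x + pathCost w x b t := by
  induction a with
  | nil => intro s x b t; simp [pathCost]
  | cons y ys ih => intro s x b t; simp [pathCost, ih, add_assoc]

theorem pathCost_reverse (hsymm : ∀ u v, w u v = w v u) :
    ∀ (p : List V) (s t : V), pathCost w s p t = pathCost w t p.reverse s := by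
  intro p
  induction p with
  | nil => intro s t; simp [pathCost, hsymm s t]
  | cons x xs ih =>
    intro s t
    have : (x :: xs).reverse = xs.reverse ++ x :: [] := by simp
    rw [this, pathCost_append]
    simp only [pathCost]
    rw [← ih x t, hsymm x s, add_comm]

theorem gdist_self (v : V) : gdist w v v = 0 := by simp [gdist]

theorem gdist_le_pathCost (s t : V) (p : List V) : gdist w s t ≤ pathCost w s p t := by
  unfold gdist
  split
  · exact zero_le
  · exact iInf_le _ p

theorem gdist_symm (hsymm : ∀ u v, w u v = w v u) (s t : V) :
    gdist w s t = gdist w t s := by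
  have key : ∀ a b : V, a ≠ b →
      (⨅ p : List V, pathCost w a p b) ≤ ⨅ p : List V, pathCost w b p a := by
    intro a b _
    refine le_iInf fun p => ?_
    have := iInf_le (fun q : List V => pathCost w a q b) p.reverse
    rwa [← pathCost_reverse w hsymm p b a] at this
  unfold gdist
  by_cases h : s = t
  · simp [h]
  · rw [if_neg h, if_neg (Ne.symm h)]
    exact le_antisymm (key s t h) (key t s (Ne.symm h))

theorem exists_nodup_le (t : V) : ∀ (p : List V) (s : V),
    ∃ q : List V, q.Nodup ∧ pathCost w s q t ≤ pathCost w s p t := by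
  intro p
  induction p with
  | nil => intro s; exact ⟨[], List.nodup_nil, le_rfl⟩
  | cons x xs ih =>
    intro s
    obtain ⟨q, hq, hle⟩ := ih x
    by_cases hx : x ∈ q
    · obtain ⟨a, b, hab⟩ := List.append_of_mem hx
      refine ⟨x :: b, ?_, ?_⟩
      · subst hab
        have := hq
        rw [List.nodup_append] at this
        obtain ⟨-, h2, h3⟩ := this
        exact h2
      · subst hab
        rw [pathCost_append] at hle
        show w s x + pathCost w x b t ≤ pathCost w s (x :: xs) t
        calc w s x + pathCost w x b t ≤ w s x + (pathCost w x a x + pathCost w x b t) := by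
              gcongr; exact le_add_self
          _ ≤ w s x + pathCost w x xs t := by gcongr
          _ = pathCost w s (x :: xs) t := rfl
    · refine ⟨x :: q, List.nodup_cons.mpr ⟨hx, hq⟩, ?_⟩
      show w s x + pathCost w x q t ≤ w s x + pathCost w x xs t
      gcongr

theorem exists_shortest [Fintype V] {s t : V} (h : s ≠ t) :
    ∃ p : List V, pathCost w s p t = gdist w s t := by
  obtain ⟨q0, -, hq0⟩ := Finset.exists_min_image (Finset.univ : Finset {l : List V // l.Nodup})
    (fun l => pathCost w s l.1 t) ⟨⟨[], List.nodup_nil⟩, Finset.mem_univ _⟩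
  refine ⟨q0.1, le_antisymm ?_ (gdist_le_pathCost w s t q0.1)⟩
  unfold gdist
  rw [if_neg h]
  refine le_iInf fun p => ?_
  obtain ⟨q, hnd, hle⟩ := exists_nodup_le w t p s
  exact (hq0 ⟨q, hnd⟩ (Finset.mem_univ _)).trans hle

theorem gdist_triangle [Fintype V] (s c t : V) :
    gdist w s t ≤ gdist w s c + gdist w c t := by
  by_cases hsc : s = c
  · subst hsc; rw [gdist_self, zero_add]
  by_cases hct : c = t
  · subst hct; rw [gdist_self, add_zero]
  obtain ⟨p, hp⟩ := exists_shortest w hsc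
  obtain ⟨q, hq⟩ := exists_shortest w hct
  calc gdist w s t ≤ pathCost w s (p ++ c :: q) t := gdist_le_pathCost w s t _
    _ = pathCost w s p c + pathCost w c q t := pathCost_append w p s c q t
    _ = gdist w s c + gdist w c t := by rw [hp, hq]

theorem ennreal_eq_of_add_le {a b x y : ℝ≥0∞} (hx : x ≤ a) (hy : y ≤ b)
    (h : a + b ≤ x + y) (ha : a ≠ ⊤) (hb : b ≠ ⊤) : x = a ∧ y = b := by
  constructor
  · by_contra hne
    have hlt : x < a := lt_of_le_of_ne hx hne
    have hy' : y ≠ ⊤ := fun hytop => hb (top_le_iff.mp (hytop ▸ hy))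
    have : x + y < a + b := by
      calc x + y < a + y := ENNReal.add_lt_add_right hy' hlt
        _ ≤ a + b := by gcongr
    exact absurd h (not_le.mpr this)
  · by_contra hne
    have hlt : y < b := lt_of_le_of_ne hy hne
    have : x + y < a + b := by
      have hx' : x ≠ ⊤ := fun hxtop => ha (top_le_iff.mp (hxtop ▸ hx))
      calc x + y < x + b := ENNReal.add_lt_add_left hx' hlt
        _ ≤ a + b := by gcongr
    exact absurd h (not_le.mpr this)

end Aux

/-- The canonical 2-hop labeling satisfies the 2-hop cover property: for every pair of
vertices `s, t` of a finite connected positively-weighted graph there is a common hub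
`c ∈ L(s) ∩ L(t)` with `d(s,c) + d(c,t) = d(s,t)` — namely the highest-ranked vertex on a
shortest `s`–`t` path. -/
theorem canonical_labeling_two_hop_cover
    {V : Type*} [Fintype V] [DecidableEq V]
    (w : V → V → ℝ≥0∞) (r : V → ℕ)
    (hinj : Function.Injective r)
    (hsymm : ∀ u v, w u v = w v u)
    (hpos : ∀ u v, u ≠ v → 0 < w u v)
    -- connectivity
    (hconn : ∀ s t : V, gdist w s t ≠ ⊤) :
    ∀ s t : V, ∃ c, canonicalHub w r s c ∧ canonicalHub w r t c ∧
      gdist w s c + gdist w c t = gdist w s t := by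
  intro s t
  by_cases hst : s = t
  · subst hst
    refine ⟨s, Or.inl rfl, Or.inl rfl, ?_⟩
    rw [gdist_self, zero_add]
  obtain ⟨p, hp⟩ := exists_shortest w hst
  set l : List V := s :: (p ++ [t]) with hl
  obtain ⟨c, hcl, hcmax⟩ := Finset.exists_max_image l.toFinset r ⟨s, by simp [hl]⟩
  rw [List.mem_toFinset] at hcl
  have hrank : ∀ x ∈ l, r x ≤ r c := fun x hx => hcmax x (List.mem_toFinset.mpr hx)
  have hs_l : s ∈ l := by simp [hl]
  have ht_l : t ∈ l := by simp [hl]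
  rw [hl] at hcl
  rcases List.mem_cons.mp hcl with hcs | hc'
  · -- c = s
    subst hcs
    refine ⟨c, Or.inl rfl, ?_, ?_⟩
    · refine Or.inr ⟨hrank t ht_l, p.reverse, ?_, ?_, ?_⟩
      · rw [← pathCost_reverse w hsymm p c t, hp, gdist_symm w hsymm c t]
      · exact hconn t c
      · intro x hx
        rw [List.mem_reverse] at hx
        exact hrank x (by simp [hl, hx])
    · rw [gdist_self, zero_add]
  rcases (List.mem_append.mp hc') with hcp | hct
  · -- c ∈ p : split p = a ++ c :: b
    obtain ⟨a, b, hab⟩ := List.append_of_mem hcp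
    have hsplit : pathCost w s a c + pathCost w c b t = gdist w s t := by
      rw [← pathCost_append w a s c b t, ← hab, hp]
    have hfin : pathCost w s a c + pathCost w c b t ≠ ⊤ := by
      rw [hsplit]; exact hconn s t
    have hA : pathCost w s a c ≠ ⊤ := fun h => hfin (by simp [h])
    have hB : pathCost w c b t ≠ ⊤ := fun h => hfin (by simp [h])
    have hgA : gdist w s c ≤ pathCost w s a c := gdist_le_pathCost w s c a
    have hgB : gdist w c t ≤ pathCost w c b t := gdist_le_pathCost w c t b
    have htri : pathCost w s a c + pathCost w c b t ≤ gdist w s c + gdist w c t := by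
      rw [hsplit]; exact gdist_triangle w s c t
    obtain ⟨heqA, heqB⟩ := ennreal_eq_of_add_le hgA hgB htri hA hB
    have hmem : ∀ x ∈ a, x ∈ l := by
      intro x hx; simp [hl, hab, hx]
    have hmemb : ∀ x ∈ b, x ∈ l := by
      intro x hx; simp [hl, hab, hx]
    refine ⟨c, ?_, ?_, ?_⟩
    · refine Or.inr ⟨hrank s hs_l, a, heqA.symm, ?_, fun x hx => hrank x (hmem x hx)⟩
      rw [heqA]; exact hA
    · refine Or.inr ⟨hrank t ht_l, b.reverse, ?_, ?_, ?_⟩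
      · rw [← pathCost_reverse w hsymm b c t, ← heqB]; exact gdist_symm w hsymm c t
      · exact hconn t c
      · intro x hx
        rw [List.mem_reverse] at hx
        exact hrank x (hmemb x hx)
    · rw [heqA, heqB]; exact hsplit
  · -- c = t
    have hct' : c = t := by simpa using hct
    subst hct'
    refine ⟨c, ?_, Or.inl rfl, ?_⟩
    · refine Or.inr ⟨hrank s hs_l, p, hp, hconn s c, fun x hx => hrank x (by simp [hl, hx])⟩
    · rw [gdist_self, add_zero]
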